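/- arXiv:2410.16921 — 2 statements merged into one kernel-verified Lean document; each statement's English description precedes it below -/
import Mathlib

section
/- Let D > 1, c ≥ 1 be coprime integers, χ a primitive Dirichlet character mod D, and ℓ, n positive integers with ℓ = ℓ₀ℓ' where ℓ₀ = gcd(ℓ, D^∞) (the largest divisor of ℓ composed of primes dividing D) and gcd(ℓ', D) = 1. Then S_χ(ℓ₀Dn, ℓ'; cD) = S(n, ℓ·D̄; c) · χ̄(c) · χ(ℓ') · ε_{χ̄} · √D, where D̄ is an inverse of D mod c, S(a,b;c) is the ordinary Kloosterman sum, and ε_χ = D^{-1/2} Σ_{α mod D} χ(α) e(α/D) is the normalized Gauss sum. -/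
open Complex

/-- `e(t) = exp(2πit)`. -/
noncomputable def eC (t : ℝ) : ℂ := Complex.exp (2 * Real.pi * Complex.I * t)

/-- Twisted Kloosterman sum `S_χ(m,n;c)` for a Dirichlet character `χ` mod `D` (with `D ∣ c`). -/
noncomputable def twistedKloosterman (D c : ℕ) [NeZero c] (χ : DirichletCharacter ℂ D)
    (m n : ℤ) : ℂ :=
  ∑ x : (ZMod c)ˣ,
    (starRingEnd ℂ) (χ (ZMod.cast (x : ZMod c))) *
      eC (((m * ((((x⁻¹ : (ZMod c)ˣ) : ZMod c)).val : ℤ) + n * (((x : ZMod c)).val : ℤ) : ℤ) : ℝ) / c)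

/-- Ordinary Kloosterman sum `S(m,n;c)`. -/
noncomputable def kloosterman (c : ℕ) [NeZero c] (m n : ℤ) : ℂ :=
  ∑ x : (ZMod c)ˣ,
    eC (((m * ((((x⁻¹ : (ZMod c)ˣ) : ZMod c)).val : ℤ) + n * (((x : ZMod c)).val : ℤ) : ℤ) : ℝ) / c)

/-- Normalized Gauss sum `ε_χ = D^{-1/2} Σ_{α mod D} χ(α) e(α/D)`. -/
noncomputable def gaussSumNorm (D : ℕ) [NeZero D] (χ : DirichletCharacter ℂ D) : ℂ :=
  (Real.sqrt D)⁻¹ * ∑ α : ZMod D, χ α * eC ((α.val : ℝ) / D)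

/-- Normalized Gauss sum of the conjugate character, `ε_χ̄`. -/
noncomputable def gaussSumNormBar (D : ℕ) [NeZero D] (χ : DirichletCharacter ℂ D) : ℂ :=
  (Real.sqrt D)⁻¹ * ∑ α : ZMod D, (starRingEnd ℂ) (χ α) * eC ((α.val : ℝ) / D)

lemma eC_add (s t : ℝ) : eC (s + t) = eC s * eC t := by
  rw [eC, eC, eC, ← Complex.exp_add]
  push_cast
  ring_nf

lemma eC_intCast (k : ℤ) : eC (k : ℝ) = 1 := by
  rw [eC]
  rw [show ((2 : ℂ) * Real.pi * Complex.I * ((k : ℝ) : ℂ)) = (k : ℤ) * (2 * Real.pi * Complex.I) by push_cast; ring]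
  exact Complex.exp_int_mul_two_pi_mul_I k

lemma eC_int_add (t : ℝ) (k : ℤ) : eC (t + k) = eC t := by
  rw [eC_add, eC_intCast, mul_one]

lemma eC_congr (N : ℕ) [NeZero N] {a b : ℤ} (h : (a : ZMod N) = (b : ZMod N)) :
    eC ((a : ℝ) / N) = eC ((b : ℝ) / N) := by
  rw [ZMod.intCast_eq_intCast_iff] at h
  obtain ⟨k, hk⟩ := h.dvd
  have hb : (b : ℝ) = a + N * k := by
    have : (b : ℤ) = a + N * k := by linarith [hk]
    exact_mod_cast congrArg (Int.cast : ℤ → ℝ) this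
  have hN : (N : ℝ) ≠ 0 := Nat.cast_ne_zero.mpr (NeZero.ne N)
  rw [hb, show ((a : ℝ) + N * k) / N = a / N + k by field_simp, eC_int_add]

/-- standard additive character of `ZMod N` -/
noncomputable def stdChar (N : ℕ) [NeZero N] : AddChar (ZMod N) ℂ where
  toFun x := eC ((x.val : ℝ) / N)
  map_zero_eq_one' := by simp [ZMod.val_zero, eC]
  map_add_eq_mul' a b := by
    have h1 : eC (((a + b).val : ℝ) / N) = eC (((a.val + b.val : ℤ) : ℝ) / N) := by
      have : ((((a+b).val : ℤ)) : ZMod N) = ((a.val + b.val : ℤ) : ZMod N) := by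
        push_cast
        simp [ZMod.natCast_val, ZMod.cast_id]
      simpa using eC_congr N this
    rw [h1, ← eC_add]
    congr 1
    push_cast
    ring

lemma stdChar_apply (N : ℕ) [NeZero N] (x : ZMod N) : stdChar N x = eC ((x.val : ℝ) / N) := rfl

lemma stdChar_intCast (N : ℕ) [NeZero N] (a : ℤ) : stdChar N (a : ZMod N) = eC ((a : ℝ) / N) := by
  rw [stdChar_apply]
  have : ((((a : ZMod N).val : ℤ)) : ZMod N) = (a : ZMod N) := by
    simp [ZMod.natCast_val, ZMod.cast_id]
  simpa using eC_congr N this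

lemma eC_term_eq (c : ℕ) [NeZero c] (m n : ℤ) (x : (ZMod c)ˣ) :
    eC (((m * ((((x⁻¹ : (ZMod c)ˣ) : ZMod c)).val : ℤ) + n * (((x : ZMod c)).val : ℤ) : ℤ) : ℝ) / c)
      = stdChar c ((m : ZMod c) * ((x⁻¹ : (ZMod c)ˣ) : ZMod c) + (n : ZMod c) * (x : ZMod c)) := by
  rw [show ((m : ZMod c) * ((x⁻¹ : (ZMod c)ˣ) : ZMod c) + (n : ZMod c) * (x : ZMod c))
      = (((m * ((((x⁻¹ : (ZMod c)ˣ) : ZMod c)).val : ℤ) + n * (((x : ZMod c)).val : ℤ) : ℤ)) : ZMod c) by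
    push_cast
    simp [ZMod.natCast_val, ZMod.cast_id]]
  rw [stdChar_intCast]

lemma kloosterman_eq (c : ℕ) [NeZero c] (m n : ℤ) :
    kloosterman c m n
      = ∑ x : (ZMod c)ˣ, stdChar c ((m : ZMod c) * ((x⁻¹ : (ZMod c)ˣ) : ZMod c) + (n : ZMod c) * (x : ZMod c)) := by
  unfold kloosterman
  exact Finset.sum_congr rfl fun x _ => eC_term_eq c m n x

lemma eC_split (c D : ℕ) [NeZero c] [NeZero D] (uu vv : ℤ) (h : c * uu + D * vv = 1) (a : ℤ) :
    eC ((a : ℝ) / (c * D : ℕ)) = eC (((a * vv : ℤ) : ℝ) / c) * eC (((a * uu : ℤ) : ℝ) / D) := by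
  rw [← eC_add]
  congr 1
  have hc : (c : ℝ) ≠ 0 := Nat.cast_ne_zero.mpr (NeZero.ne c)
  have hd : (D : ℝ) ≠ 0 := Nat.cast_ne_zero.mpr (NeZero.ne D)
  have h' : (c : ℝ) * uu + D * vv = 1 := by exact_mod_cast congrArg (Int.cast : ℤ → ℝ) h
  push_cast
  field_simp
  linear_combination (-(a : ℝ)) * h'

lemma stdChar_split (c D : ℕ) [NeZero c] [NeZero D] (uu vv : ℤ) (h : c * uu + D * vv = 1)
    (z : ZMod (c * D)) :
    haveI : NeZero (c * D) := ⟨mul_ne_zero (NeZero.ne c) (NeZero.ne D)⟩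
    stdChar (c * D) z
      = stdChar c ((vv : ZMod c) * ZMod.castHom (dvd_mul_right c D) (ZMod c) z)
        * stdChar D ((uu : ZMod D) * ZMod.castHom (dvd_mul_left D c) (ZMod D) z) := by
  haveI : NeZero (c * D) := ⟨mul_ne_zero (NeZero.ne c) (NeZero.ne D)⟩
  have hz : ((z.val : ℤ) : ZMod (c * D)) = z := by simp [ZMod.natCast_val, ZMod.cast_id]
  have h1 : stdChar (c * D) z = eC (((z.val : ℤ) : ℝ) / (c * D : ℕ)) := by
    conv_lhs => rw [← hz]
    rw [stdChar_intCast]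
  rw [h1, eC_split c D uu vv h, ← stdChar_intCast, ← stdChar_intCast]
  congr 1
  · congr 1
    push_cast
    rw [ZMod.natCast_val, ZMod.castHom_apply]
    ring
  · congr 1
    push_cast
    rw [ZMod.natCast_val, ZMod.castHom_apply]
    ring

noncomputable def crtUnits (c D : ℕ) (h : Nat.Coprime c D) :
    (ZMod (c * D))ˣ ≃* (ZMod c)ˣ × (ZMod D)ˣ :=
  (Units.mapEquiv (ZMod.chineseRemainder h).toMulEquiv).trans MulEquiv.prodUnits

lemma crtUnits_fst (c D : ℕ) (h : Nat.Coprime c D) (x : (ZMod (c * D))ˣ) :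
    (((crtUnits c D h x).1 : (ZMod c)ˣ) : ZMod c)
      = ZMod.castHom (dvd_mul_right c D) (ZMod c) (x : ZMod (c * D)) := by
  have h1 : (((crtUnits c D h x).1 : (ZMod c)ˣ) : ZMod c)
      = ((ZMod.chineseRemainder h (x : ZMod (c * D))).1) := rfl
  rw [h1]
  have h2 : (RingHom.fst (ZMod c) (ZMod D)).comp
      ((ZMod.chineseRemainder h : ZMod (c * D) ≃+* ZMod c × ZMod D) : ZMod (c * D) →+* ZMod c × ZMod D)
      = ZMod.castHom (dvd_mul_right c D) (ZMod c) := RingHom.ext_zmod _ _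
  exact DFunLike.congr_fun h2 (x : ZMod (c * D))

lemma crtUnits_snd (c D : ℕ) (h : Nat.Coprime c D) (x : (ZMod (c * D))ˣ) :
    (((crtUnits c D h x).2 : (ZMod D)ˣ) : ZMod D)
      = ZMod.castHom (dvd_mul_left D c) (ZMod D) (x : ZMod (c * D)) := by
  have h1 : (((crtUnits c D h x).2 : (ZMod D)ˣ) : ZMod D)
      = ((ZMod.chineseRemainder h (x : ZMod (c * D))).2) := rfl
  rw [h1]
  have h2 : (RingHom.snd (ZMod c) (ZMod D)).comp
      ((ZMod.chineseRemainder h : ZMod (c * D) ≃+* ZMod c × ZMod D) : ZMod (c * D) →+* ZMod c × ZMod D)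
      = ZMod.castHom (dvd_mul_left D c) (ZMod D) := RingHom.ext_zmod _ _
  exact DFunLike.congr_fun h2 (x : ZMod (c * D))

lemma sum_eq_sum_units {N : ℕ} [NeZero N] (F : ZMod N → ℂ) (hF : ∀ z, ¬IsUnit z → F z = 0) :
    ∑ z : ZMod N, F z = ∑ w : (ZMod N)ˣ, F (w : ZMod N) := by
  classical
  have hinj : ∀ a ∈ (Finset.univ : Finset (ZMod N)ˣ), ∀ b ∈ Finset.univ,
      (fun w : (ZMod N)ˣ => (w : ZMod N)) a = (fun w : (ZMod N)ˣ => (w : ZMod N)) b → a = b :=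
    fun a _ b _ hab => Units.ext hab
  calc ∑ z : ZMod N, F z
      = ∑ z ∈ Finset.univ.image (fun w : (ZMod N)ˣ => (w : ZMod N)), F z :=
        (Finset.sum_subset (Finset.subset_univ _) (fun z _ hz => hF z (fun hu => hz
          (Finset.mem_image.mpr ⟨hu.unit, Finset.mem_univ _, hu.unit_spec⟩)))).symm
    _ = ∑ w : (ZMod N)ˣ, F (w : ZMod N) := Finset.sum_image hinj

lemma conj_mul_self_eq_one {N : ℕ} (χ : DirichletCharacter ℂ N) {z : ZMod N} (hz : IsUnit z) :
    (starRingEnd ℂ) (χ z) * χ z = 1 := by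
  have h := DirichletCharacter.unit_norm_eq_one χ hz.unit
  rw [hz.unit_spec] at h
  have := Complex.mul_conj (χ z)
  rw [Complex.normSq_eq_norm_sq, h] at this
  rw [mul_comm] at this
  simpa using this

/-- Twisted multiplicativity: for primitive `χ` mod `D`, `(c,D)=1`, and `ℓ = ℓ₀ℓ'` with
`ℓ₀ = gcd(ℓ, D^∞)` and `(ℓ',D)=1`, one has
`S_χ(ℓ₀Dn, ℓ'; cD) = S(n, ℓD̄; c) · χ̄(c) · χ(ℓ') · ε_χ̄ · √D`. -/
theorem twistedKloosterman_mul_level (D c : ℕ) [NeZero D] [NeZero c] (hD : 1 < D)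
    (hc : 1 ≤ c) (hcop : Nat.Coprime c D) (χ : DirichletCharacter ℂ D)
    (hχ : χ.IsPrimitive) (ℓ ℓ₀ ℓ' n : ℕ) (hℓpos : 1 ≤ ℓ) (hn : 1 ≤ n)
    (hfac : ℓ = ℓ₀ * ℓ')
    (hℓ₀ : ∀ p : ℕ, p.Prime → p ∣ ℓ₀ → p ∣ D) (hℓ' : Nat.Coprime ℓ' D)
    (Dbar : ℤ) (hDbar : (D : ℤ) * Dbar ≡ 1 [ZMOD (c : ℤ)]) :
    twistedKloosterman D (c * D) χ ((ℓ₀ : ℤ) * D * n) (ℓ' : ℤ)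
      = kloosterman c (n : ℤ) ((ℓ : ℤ) * Dbar) * (starRingEnd ℂ) (χ (c : ZMod D))
          * χ ((ℓ' : ℕ) : ZMod D) * gaussSumNormBar D χ * (Real.sqrt D : ℂ) := by
  haveI : NeZero (c * D) := ⟨mul_ne_zero (NeZero.ne c) (NeZero.ne D)⟩
  -- Bezout
  obtain ⟨uu, vv, hBez⟩ : ∃ uu vv : ℤ, (c : ℤ) * uu + (D : ℤ) * vv = 1 :=
    ⟨Nat.gcdA c D, Nat.gcdB c D, by
      have := Nat.gcd_eq_gcd_ab c D
      rw [hcop] at this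
      omega⟩
  set E := crtUnits c D hcop with hE
  -- component facts
  have hE1 : ∀ x : (ZMod (c * D))ˣ, (((E x).1 : (ZMod c)ˣ) : ZMod c)
      = ZMod.castHom (dvd_mul_right c D) (ZMod c) (x : ZMod (c * D)) :=
    fun x => crtUnits_fst c D hcop x
  have hE2 : ∀ x : (ZMod (c * D))ˣ, (((E x).2 : (ZMod D)ˣ) : ZMod D)
      = ZMod.castHom (dvd_mul_left D c) (ZMod D) (x : ZMod (c * D)) :=
    fun x => crtUnits_snd c D hcop x
  have hE1inv : ∀ x : (ZMod (c * D))ˣ, ((((E x).1)⁻¹ : (ZMod c)ˣ) : ZMod c)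
      = ZMod.castHom (dvd_mul_right c D) (ZMod c) ((x⁻¹ : (ZMod (c * D))ˣ) : ZMod (c * D)) := by
    intro x
    have : ((E x).1)⁻¹ = (E x⁻¹).1 := by rw [map_inv]; rfl
    rw [this, hE1]
  -- the two local functions
  set f : (ZMod c)ˣ → ℂ := fun u => stdChar c ((vv : ZMod c) *
    ((((ℓ₀ : ℤ) * D * n : ℤ) : ZMod c) * ((u⁻¹ : (ZMod c)ˣ) : ZMod c)
      + (((ℓ' : ℤ)) : ZMod c) * (u : ZMod c))) with hfdef
  set g : (ZMod D)ˣ → ℂ := fun w => (starRingEnd ℂ) (χ (w : ZMod D)) *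
    stdChar D ((uu : ZMod D) * ((((ℓ' : ℤ)) : ZMod D) * (w : ZMod D))) with hgdef
  have hsum : ∀ x : (ZMod (c * D))ˣ,
      (starRingEnd ℂ) (χ (ZMod.cast (x : ZMod (c * D)))) *
        eC ((((((ℓ₀ : ℤ) * D * n) * ((((x⁻¹ : (ZMod (c * D))ˣ) : ZMod (c * D))).val : ℤ)
          + (ℓ' : ℤ) * (((x : ZMod (c * D))).val : ℤ) : ℤ)) : ℝ) / (c * D : ℕ))
      = f (E x).1 * g (E x).2 := by
    intro x
    rw [eC_term_eq (c * D) ((ℓ₀ : ℤ) * D * n) (ℓ' : ℤ) x]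
    rw [stdChar_split c D uu vv hBez]
    have hcast : (ZMod.cast (x : ZMod (c * D)) : ZMod D) = (((E x).2 : (ZMod D)ˣ) : ZMod D) := by
      rw [hE2 x, ZMod.castHom_apply]
    have hm0 : ((((ℓ₀ : ℤ) * D * n : ℤ)) : ZMod D) = 0 := by
      push_cast
      simp
    have hπ1 : ZMod.castHom (dvd_mul_right c D) (ZMod c)
        (((((ℓ₀ : ℤ) * D * n : ℤ)) : ZMod (c * D)) * ((x⁻¹ : (ZMod (c * D))ˣ) : ZMod (c * D))
          + (((ℓ' : ℤ)) : ZMod (c * D)) * (x : ZMod (c * D)))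
        = (((ℓ₀ : ℤ) * D * n : ℤ) : ZMod c) * (((E x).1⁻¹ : (ZMod c)ˣ) : ZMod c)
          + (((ℓ' : ℤ)) : ZMod c) * (((E x).1 : (ZMod c)ˣ) : ZMod c) := by
      rw [map_add, map_mul, map_mul, map_intCast, map_intCast, hE1 x, hE1inv x]
    have hπ2 : ZMod.castHom (dvd_mul_left D c) (ZMod D)
        (((((ℓ₀ : ℤ) * D * n : ℤ)) : ZMod (c * D)) * ((x⁻¹ : (ZMod (c * D))ˣ) : ZMod (c * D))
          + (((ℓ' : ℤ)) : ZMod (c * D)) * (x : ZMod (c * D)))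
        = (((ℓ' : ℤ)) : ZMod D) * (((E x).2 : (ZMod D)ˣ) : ZMod D) := by
      rw [map_add, map_mul, map_mul, map_intCast, map_intCast, hE2 x, hm0, zero_mul, zero_add]
    rw [hπ1, hπ2, hcast, hfdef, hgdef]
    ring
  rw [twistedKloosterman]
  rw [Finset.sum_congr rfl (fun x _ => hsum x)]
  rw [show (∑ x : (ZMod (c * D))ˣ, f (E x).1 * g (E x).2)
      = ∑ p : (ZMod c)ˣ × (ZMod D)ˣ, f p.1 * g p.2 from
    E.toEquiv.sum_comp (fun p => f p.1 * g p.2)]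
  rw [Fintype.sum_prod_type, ← Finset.sum_mul_sum]
  -- now evaluate the two sums
  have hKloos : (∑ u : (ZMod c)ˣ, f u) = kloosterman c (n : ℤ) ((ℓ : ℤ) * Dbar) := by
    subst hfac
    have hcopℓ₀ : Nat.Coprime ℓ₀ c := by
      by_contra hg
      have hd : Nat.gcd ℓ₀ c ≠ 1 := hg
      have hpp : (Nat.gcd ℓ₀ c).minFac.Prime := Nat.minFac_prime hd
      have hpl : (Nat.gcd ℓ₀ c).minFac ∣ ℓ₀ := (Nat.minFac_dvd _).trans (Nat.gcd_dvd_left _ _)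
      have hpc : (Nat.gcd ℓ₀ c).minFac ∣ c := (Nat.minFac_dvd _).trans (Nat.gcd_dvd_right _ _)
      have hpD : (Nat.gcd ℓ₀ c).minFac ∣ D := hℓ₀ _ hpp hpl
      have hone : (Nat.gcd ℓ₀ c).minFac ∣ Nat.gcd c D := Nat.dvd_gcd hpc hpD
      rw [hcop] at hone
      exact hpp.ne_one (Nat.dvd_one.mp hone)
    have hu0 : IsUnit ((ℓ₀ : ℕ) : ZMod c) := (ZMod.isUnit_iff_coprime ℓ₀ c).mpr hcopℓ₀
    set L : (ZMod c)ˣ := hu0.unit with hLdef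
    have hLspec : (L : ZMod c) = ((ℓ₀ : ℕ) : ZMod c) := hu0.unit_spec
    have hDD : ((D : ℕ) : ZMod c) * ((Dbar : ℤ) : ZMod c) = 1 := by
      have h' : (((D : ℤ) * Dbar : ℤ) : ZMod c) = ((1 : ℤ) : ZMod c) :=
        (ZMod.intCast_eq_intCast_iff _ _ _).mpr hDbar
      push_cast at h'
      simpa using h'
    have hvv : ((vv : ℤ) : ZMod c) = ((Dbar : ℤ) : ZMod c) := by
      have h1 : ((D : ℕ) : ZMod c) * ((vv : ℤ) : ZMod c) = 1 := by
        have h' : (((c : ℤ) * uu + (D : ℤ) * vv : ℤ) : ZMod c) = ((1 : ℤ) : ZMod c) := by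
          rw [hBez]
        push_cast at h'
        simpa [ZMod.natCast_self] using h'
      have hDu : IsUnit ((D : ℕ) : ZMod c) := (ZMod.isUnit_iff_coprime D c).mpr hcop.symm
      exact hDu.mul_left_cancel (h1.trans hDD.symm)
    have hLL : ((L⁻¹ : (ZMod c)ˣ) : ZMod c) * ((ℓ₀ : ℕ) : ZMod c) = 1 := by
      rw [← hLspec, Units.inv_mul]
    have main : ∀ y : (ZMod c)ˣ, f (L * y)
        = stdChar c ((((n : ℤ)) : ZMod c) * ((y⁻¹ : (ZMod c)ˣ) : ZMod c)
            + ((((ℓ₀ * ℓ' : ℕ) : ℤ) * Dbar : ℤ) : ZMod c) * (y : ZMod c)) := by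
      intro y
      rw [hfdef]
      show stdChar c _ = stdChar c _
      congr 1
      rw [mul_inv_rev, Units.val_mul, Units.val_mul, hLspec]
      have hLi : ((L⁻¹ : (ZMod c)ˣ) : ZMod c) = ((L⁻¹ : (ZMod c)ˣ) : ZMod c) := rfl
      rw [hvv]
      push_cast
      linear_combination ((n : ZMod c) * ((y⁻¹ : (ZMod c)ˣ) : ZMod c) * ((ℓ₀ : ℕ) : ZMod c)
          * ((L⁻¹ : (ZMod c)ˣ) : ZMod c)) * hDD
        + ((n : ZMod c) * ((y⁻¹ : (ZMod c)ˣ) : ZMod c)) * hLL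
    rw [kloosterman_eq]
    calc (∑ u : (ZMod c)ˣ, f u) = ∑ y : (ZMod c)ˣ, f (L * y) :=
          (Equiv.sum_comp (Equiv.mulLeft L) f).symm
      _ = _ := Finset.sum_congr rfl fun y _ => main y
  have hGauss : (∑ w : (ZMod D)ˣ, g w)
      = (starRingEnd ℂ) (χ (c : ZMod D)) * χ ((ℓ' : ℕ) : ZMod D)
        * (gaussSumNormBar D χ * (Real.sqrt D : ℂ)) := by
    set χb : DirichletCharacter ℂ D := χ.ringHomComp (starRingEnd ℂ) with hχbdef
    have hχbap : ∀ z : ZMod D, χb z = (starRingEnd ℂ) (χ z) := fun z => rfl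
    set a0 : ZMod D := ((uu : ℤ) : ZMod D) * (((ℓ' : ℤ)) : ZMod D) with ha0
    have huc : ((c : ℕ) : ZMod D) * ((uu : ℤ) : ZMod D) = 1 := by
      have h' : (((c : ℤ) * uu + (D : ℤ) * vv : ℤ) : ZMod D) = ((1 : ℤ) : ZMod D) := by
        rw [hBez]
      push_cast at h'
      rw [ZMod.natCast_self] at h'
      linear_combination h'
    have hℓ'u : IsUnit (((ℓ' : ℤ)) : ZMod D) := by
      have : IsUnit (((ℓ' : ℕ)) : ZMod D) := (ZMod.isUnit_iff_coprime ℓ' D).mpr hℓ'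
      simpa using this
    have huu : IsUnit ((uu : ℤ) : ZMod D) :=
      IsUnit.of_mul_eq_one _ (by rw [mul_comm] at huc; exact huc)
    have ha0u : IsUnit a0 := huu.mul hℓ'u
    -- convert the sum to a Gauss sum
    have h1 : (∑ w : (ZMod D)ˣ, g w) = gaussSum χb ((stdChar D).mulShift a0) := by
      rw [gaussSum]
      rw [sum_eq_sum_units (fun z => χb z * (stdChar D).mulShift a0 z)
        (fun z hz => by show χb z * ((stdChar D).mulShift a0) z = 0; rw [MulChar.map_nonunit χb hz, zero_mul])]
      refine (Finset.sum_congr rfl fun w _ => ?_).symm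
      rw [hgdef]
      show χb (w : ZMod D) * (stdChar D) (a0 * (w : ZMod D))
        = (starRingEnd ℂ) (χ (w : ZMod D)) * stdChar D ((uu : ZMod D) * ((((ℓ' : ℤ)) : ZMod D) * (w : ZMod D)))
      rw [hχbap, ha0, mul_assoc]
    have hne : χb a0 ≠ 0 := by
      have h2 : (starRingEnd ℂ) (χ a0) * χ a0 = 1 := conj_mul_self_eq_one χ ha0u
      rw [← hχbap] at h2
      exact left_ne_zero_of_mul_eq_one h2
    have h3 : gaussSum χb ((stdChar D).mulShift a0) = (χb a0)⁻¹ * gaussSum χb (stdChar D) := by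
      have h4 := gaussSum_mulShift χb (stdChar D) ha0u.unit
      rw [ha0u.unit_spec] at h4
      field_simp
      linear_combination h4
    have h5 : gaussSum χb (stdChar D) = gaussSumNormBar D χ * (Real.sqrt D : ℂ) := by
      rw [gaussSum, gaussSumNormBar]
      have hsq : ((Real.sqrt D : ℝ) : ℂ) ≠ 0 := by
        rw [Complex.ofReal_ne_zero, Real.sqrt_ne_zero']
        exact_mod_cast Nat.zero_lt_of_lt hD
      rw [mul_comm, ← mul_assoc]
      push_cast
      rw [mul_inv_cancel₀ hsq, one_mul]
      exact Finset.sum_congr rfl fun α _ => by rw [hχbap, stdChar_apply]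
    have h6 : (χb a0)⁻¹ = (starRingEnd ℂ) (χ (c : ZMod D)) * χ ((ℓ' : ℕ) : ZMod D) := by
      refine inv_eq_of_mul_eq_one_right ?_
      rw [hχbap, ha0, map_mul, map_mul]
      have hA : χ ((uu : ℤ) : ZMod D) * χ ((c : ℕ) : ZMod D) = 1 := by
        rw [← map_mul, mul_comm ((uu : ℤ) : ZMod D) _, huc, map_one]
      have hB : (starRingEnd ℂ) (χ (((ℓ' : ℤ)) : ZMod D)) * χ (((ℓ' : ℤ)) : ZMod D) = 1 :=
        conj_mul_self_eq_one χ hℓ'u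
      have hℓ'cast : (((ℓ' : ℤ)) : ZMod D) = ((ℓ' : ℕ) : ZMod D) := by push_cast; rfl
      calc (starRingEnd ℂ) (χ ((uu : ℤ) : ZMod D)) * (starRingEnd ℂ) (χ (((ℓ' : ℤ)) : ZMod D))
            * ((starRingEnd ℂ) (χ ((c : ℕ) : ZMod D)) * χ ((ℓ' : ℕ) : ZMod D))
          = ((starRingEnd ℂ) (χ ((uu : ℤ) : ZMod D) * χ ((c : ℕ) : ZMod D)))
            * ((starRingEnd ℂ) (χ (((ℓ' : ℤ)) : ZMod D)) * χ (((ℓ' : ℤ)) : ZMod D)) := by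
            rw [map_mul, hℓ'cast]; ring
        _ = 1 := by rw [hA, hB, map_one, one_mul]
    rw [h1, h3, h5, h6]
  rw [hKloos, hGauss]
  ring
end

section
/- Let D > 1 be square-free, c ≥ 1 with gcd(c, D) = 1, and ℓ, n positive integers with ℓ = ℓ₀ℓ' where ℓ₀ = gcd(ℓ, D^∞) and gcd(ℓ', D) = 1. Then for the ordinary (untwisted) Kloosterman sums, S(ℓ₀Dn, ℓ'; cD) = S(n, ℓ·D̄; c) · μ(D), where D̄ is an inverse of D mod c and μ is the Möbius function. Equivalently, S(n, ℓ·D̄; c) = μ(D) · S(ℓ₀Dn, ℓ'; cD). -/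
open Complex

section KloostermanAux

lemma eC_int (k : ℤ) : eC k = 1 := by
  simp only [eC]
  rw [show (2 * Real.pi * Complex.I * (k:ℝ) : ℂ) = (k:ℤ) * (2 * Real.pi * Complex.I) by push_cast; ring]
  exact Complex.exp_int_mul_two_pi_mul_I k

lemma eC_congr_s4 {c : ℕ} (hc : c ≠ 0) {m m' : ℤ} (h : m ≡ m' [ZMOD (c:ℤ)]) :
    eC ((m : ℝ) / c) = eC ((m' : ℝ) / c) := by
  obtain ⟨k, hk⟩ := h.dvd
  have : (m' : ℝ) / c = (m : ℝ) / c + (k : ℤ) := by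
    have hc' : (c:ℝ) ≠ 0 := Nat.cast_ne_zero.mpr hc
    field_simp
    push_cast [show m' = m + c * k by linarith [hk]]
    ring
  rw [this, eC_add, eC_int, mul_one]

noncomputable def psi (c : ℕ) [NeZero c] (a : ZMod c) : ℂ := eC ((a.val : ℝ) / c)

lemma psi_intCast (c : ℕ) [NeZero c] (m : ℤ) : psi c (m : ZMod c) = eC ((m : ℝ) / c) := by
  unfold psi
  have h : ((((m : ZMod c).val : ℤ)) : ZMod c) = (m : ZMod c) := by
    simp [ZMod.natCast_val, ZMod.intCast_cast, ZMod.cast_id]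
  rw [show ((((m : ZMod c)).val : ℝ)) = (((m : ZMod c).val : ℤ) : ℝ) by push_cast; rfl]
  exact eC_congr_s4 (NeZero.ne c) ((ZMod.intCast_eq_intCast_iff' _ _ _).mp h)

noncomputable def K (c : ℕ) [NeZero c] (m n : ZMod c) : ℂ :=
  ∑ x : (ZMod c)ˣ, psi c (m * ((x⁻¹ : (ZMod c)ˣ) : ZMod c) + n * ((x : (ZMod c)ˣ) : ZMod c))

lemma kloosterman_eq_K (c : ℕ) [NeZero c] (m n : ℤ) :
    kloosterman c m n = K c (m : ZMod c) (n : ZMod c) := by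
  unfold kloosterman K
  refine Finset.sum_congr rfl fun x _ => ?_
  rw [show ((m : ZMod c) * ((x⁻¹ : (ZMod c)ˣ) : ZMod c) + (n : ZMod c) * ((x : (ZMod c)ˣ) : ZMod c))
      = (((m * ((((x⁻¹ : (ZMod c)ˣ) : ZMod c)).val : ℤ) + n * (((x : ZMod c)).val : ℤ) : ℤ)) : ZMod c) by
    push_cast [ZMod.natCast_val, ZMod.cast_id]; ring]
  rw [psi_intCast]

lemma K_smul (c : ℕ) [NeZero c] (a : (ZMod c)ˣ) (m n : ZMod c) :
    K c ((a : ZMod c) * m) n = K c m ((a : ZMod c) * n) := by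
  unfold K
  rw [← Equiv.sum_comp (Equiv.mulLeft a)]
  refine Finset.sum_congr rfl fun x _ => ?_
  congr 1
  simp only [Equiv.coe_mulLeft, mul_inv_rev, Units.val_mul]
  linear_combination (m * ((x⁻¹:(ZMod c)ˣ) : ZMod c)) * (Units.mul_inv a)

lemma K_zero_eq (c : ℕ) [NeZero c] (b : (ZMod c)ˣ) :
    K c 0 (b : ZMod c) = K c 0 1 := by
  unfold K
  rw [← Equiv.sum_comp (Equiv.mulLeft b⁻¹)]
  refine Finset.sum_congr rfl fun x _ => ?_
  congr 1
  simp [Equiv.mulLeft]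

lemma psi_mul_split (c D : ℕ) [NeZero c] [NeZero D] [NeZero (c*D)] (u v : ℤ)
    (huv : u * D + v * c = 1) (A : ℤ) :
    psi (c*D) (A : ZMod (c*D)) = psi c ((u*A : ℤ) : ZMod c) * psi D ((v*A : ℤ) : ZMod D) := by
  rw [psi_intCast, psi_intCast, psi_intCast, ← eC_add]
  congr 1
  have hc : (c:ℝ) ≠ 0 := Nat.cast_ne_zero.mpr (NeZero.ne c)
  have hD : (D:ℝ) ≠ 0 := Nat.cast_ne_zero.mpr (NeZero.ne D)
  have hR : (u:ℝ) * D + v * c = 1 := by exact_mod_cast congrArg (Int.cast : ℤ → ℝ) huv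
  push_cast
  field_simp
  ring_nf
  linear_combination (-(A:ℝ)) * hR

lemma kloosterman_mul (c D : ℕ) [NeZero c] [NeZero D] [NeZero (c*D)] (h : Nat.Coprime c D)
    (u v M N : ℤ) (huv : u * D + v * c = 1) :
    kloosterman (c*D) M N
      = K c ((u*M : ℤ) : ZMod c) ((u*N : ℤ) : ZMod c) * K D ((v*M : ℤ) : ZMod D) ((v*N : ℤ) : ZMod D) := by
  set fc : ZMod (c*D) →* ZMod c := (ZMod.castHom (dvd_mul_right c D) (ZMod c)).toMonoidHom with hfc
  set fD : ZMod (c*D) →* ZMod D := (ZMod.castHom (dvd_mul_left D c) (ZMod D)).toMonoidHom with hfD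
  set F : (ZMod (c*D))ˣ → (ZMod c)ˣ × (ZMod D)ˣ := fun x => (Units.map fc x, Units.map fD x) with hF
  have hbij : Function.Bijective F := by
    rw [Fintype.bijective_iff_injective_and_card]
    constructor
    · intro x x' hxx
      have h1 : fc (x : ZMod (c*D)) = fc (x' : ZMod (c*D)) := congrArg Units.val (congrArg Prod.fst hxx)
      have h2 : fD (x : ZMod (c*D)) = fD (x' : ZMod (c*D)) := congrArg Units.val (congrArg Prod.snd hxx)
      have : ZMod.chineseRemainder h (x : ZMod (c*D)) = ZMod.chineseRemainder h (x' : ZMod (c*D)) := by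
        have e1 : ∀ z : ZMod (c*D), ZMod.chineseRemainder h z = (fc z, fD z) := by
          intro z
          show ZMod.castHom (show Nat.lcm c D ∣ c * D by simp [Nat.lcm_dvd_iff]) (ZMod c × ZMod D) z = (fc z, fD z)
          ext <;> simp [hfc, hfD]
        rw [e1, e1, h1, h2]
      exact Units.ext ((ZMod.chineseRemainder h).injective this)
    · simp only [Fintype.card_prod, ZMod.card_units_eq_totient, Nat.totient_mul h]
  rw [kloosterman_eq_K]
  set g1 : (ZMod c)ˣ → ℂ := fun y => psi c (((u*M : ℤ) : ZMod c) * ((y⁻¹ : (ZMod c)ˣ) : ZMod c) + ((u*N : ℤ) : ZMod c) * (y : ZMod c)) with hg1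
  set g2 : (ZMod D)ˣ → ℂ := fun z => psi D (((v*M : ℤ) : ZMod D) * ((z⁻¹ : (ZMod D)ˣ) : ZMod D) + ((v*N : ℤ) : ZMod D) * (z : ZMod D)) with hg2
  have key : ∀ x : (ZMod (c*D))ˣ,
      psi (c*D) ((M : ZMod (c*D)) * ((x⁻¹ : (ZMod (c*D))ˣ) : ZMod (c*D)) + (N : ZMod (c*D)) * (x : ZMod (c*D)))
        = g1 (F x).1 * g2 (F x).2 := by
    intro x
    set A : ℤ := M * (((x⁻¹ : (ZMod (c*D))ˣ) : ZMod (c*D)).val : ℤ) + N * (((x : ZMod (c*D))).val : ℤ) with hA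
    have hAe : ((M : ZMod (c*D)) * ((x⁻¹ : (ZMod (c*D))ˣ) : ZMod (c*D)) + (N : ZMod (c*D)) * ((x : (ZMod (c*D))ˣ) : ZMod (c*D))) = (A : ZMod (c*D)) := by
      push_cast [hA, ZMod.natCast_val, ZMod.cast_id]
      ring
    rw [hAe, psi_mul_split c D u v huv A]
    congr 1
    · simp only [hg1, hF]
      congr 1
      push_cast [hA, ZMod.natCast_val]
      rw [← map_inv (Units.map fc) x, Units.coe_map, Units.coe_map]
      simp only [hfc, RingHom.toMonoidHom_eq_coe, MonoidHom.coe_coe, ZMod.castHom_apply, ZMod.intCast_cast]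
      ring
    · simp only [hg2, hF]
      congr 1
      push_cast [hA, ZMod.natCast_val]
      rw [← map_inv (Units.map fD) x, Units.coe_map, Units.coe_map]
      simp only [hfD, RingHom.toMonoidHom_eq_coe, MonoidHom.coe_coe, ZMod.castHom_apply, ZMod.intCast_cast]
      ring
  show K (c*D) (M : ZMod (c*D)) (N : ZMod (c*D)) = _
  unfold K
  calc ∑ x : (ZMod (c*D))ˣ, psi (c*D) ((M : ZMod (c*D)) * ((x⁻¹ : (ZMod (c*D))ˣ) : ZMod (c*D)) + (N : ZMod (c*D)) * (x : ZMod (c*D)))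
      = ∑ x : (ZMod (c*D))ˣ, g1 (F x).1 * g2 (F x).2 := Finset.sum_congr rfl fun x _ => key x
    _ = ∑ p : (ZMod c)ˣ × (ZMod D)ˣ, g1 p.1 * g2 p.2 :=
        Function.Bijective.sum_comp hbij (fun p => g1 p.1 * g2 p.2)
    _ = (∑ y : (ZMod c)ˣ, g1 y) * (∑ z : (ZMod D)ˣ, g2 z) := by
        rw [Fintype.sum_prod_type, ← Finset.sum_mul_sum]
    _ = _ := rfl

noncomputable def R (c : ℕ) [NeZero c] : ℂ := K c 0 1

lemma psi_sum_eq_zero (n : ℕ) [NeZero n] (hn : 1 < n) : ∑ a : ZMod n, psi n a = 0 := by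
  have hprim : IsPrimitiveRoot (Complex.exp (2 * Real.pi * Complex.I / n)) n :=
    Complex.isPrimitiveRoot_exp n (NeZero.ne n)
  have hpsi : ∀ a : ZMod n, psi n a = (Complex.exp (2 * Real.pi * Complex.I / n)) ^ a.val := by
    intro a
    rw [psi, ← Complex.exp_nat_mul, eC]
    congr 1
    push_cast
    ring
  rw [Finset.sum_congr rfl fun a _ => hpsi a, ← hprim.geom_sum_eq_zero hn]
  refine Finset.sum_nbij' (fun a => a.val) (fun i => (i : ZMod n)) ?_ ?_ ?_ ?_ ?_
  · intro a _; exact Finset.mem_range.mpr (ZMod.val_lt a)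
  · intro i _; exact Finset.mem_univ _
  · intro a _; exact ZMod.natCast_zmod_val a
  · intro i hi; exact ZMod.val_natCast_of_lt (Finset.mem_range.mp hi)
  · intro a _; rfl

lemma R_one : R 1 = 1 := by
  rw [R, K]
  have h0 : ∀ a : ZMod 1, a.val = 0 := fun a => by
    have : a = 0 := Subsingleton.elim a 0
    simp [this]
  simp [psi, h0, eC]

lemma R_prime (p : ℕ) [Fact p.Prime] : R p = -1 := by
  haveI : NeZero p := ⟨(Fact.out : p.Prime).ne_zero⟩
  have hp1 : 1 < p := (Fact.out : p.Prime).one_lt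
  have h0 : ∑ a : ZMod p, psi p a = 0 := psi_sum_eq_zero p hp1
  have hsplit : ∑ a : ZMod p, psi p a = psi p 0 + ∑ a ∈ Finset.univ.erase (0 : ZMod p), psi p a :=
    (Finset.add_sum_erase _ _ (Finset.mem_univ 0)).symm
  have hunits : R p = ∑ a ∈ Finset.univ.erase (0 : ZMod p), psi p a := by
    rw [R, K]
    refine Finset.sum_bij (fun (x : (ZMod p)ˣ) _ => (x : ZMod p)) ?_ ?_ ?_ ?_
    · intro x _
      exact Finset.mem_erase.mpr ⟨x.ne_zero, Finset.mem_univ _⟩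
    · intro x _ y _ hxy
      exact Units.ext hxy
    · intro a ha
      have : IsUnit a := Ne.isUnit (Finset.mem_erase.mp ha).1
      exact ⟨this.unit, Finset.mem_univ _, this.unit_spec.symm⟩
    · intro x _
      rw [zero_mul, one_mul, zero_add]
  have hpsi0 : psi p 0 = 1 := by simp [psi, ZMod.val_zero, eC]
  have key : (0:ℂ) = 1 + ∑ a ∈ Finset.univ.erase (0 : ZMod p), psi p a := by
    rw [← h0, hsplit, hpsi0]
  rw [hunits]
  linear_combination -key

lemma KL_R_mul (a b : ℕ) [NeZero a] [NeZero b] [NeZero (a*b)] (h : Nat.Coprime a b) :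
    R (a*b) = R a * R b := by
  obtain ⟨s, t, hst⟩ := Nat.isCoprime_iff_coprime.mpr h
  have hmul := kloosterman_mul a b h t s 0 1 (by linarith)
  have h1 : R (a*b) = kloosterman (a*b) 0 1 := by
    rw [kloosterman_eq_K]; norm_num [R]
  have h2 : K a ((t*0 : ℤ) : ZMod a) ((t*1 : ℤ) : ZMod a) = R a := by
    have hu : IsUnit ((t : ℤ) : ZMod a) := by
      apply IsUnit.of_mul_eq_one ((b : ZMod a))
      have : ((t * b + s * a : ℤ) : ZMod a) = ((1 : ℤ) : ZMod a) := by
        rw [show (t * b + s * a : ℤ) = 1 by linarith]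
      push_cast at this
      simpa using this
    rw [show ((t*0 : ℤ) : ZMod a) = 0 by push_cast; ring,
        show ((t*1 : ℤ) : ZMod a) = ((t : ℤ) : ZMod a) by push_cast; ring,
        show ((t : ℤ) : ZMod a) = (hu.unit : ZMod a) by rw [hu.unit_spec]]
    exact K_zero_eq a hu.unit
  have h3 : K b ((s*0 : ℤ) : ZMod b) ((s*1 : ℤ) : ZMod b) = R b := by
    have hu : IsUnit ((s : ℤ) : ZMod b) := by
      apply IsUnit.of_mul_eq_one ((a : ZMod b))
      have : ((s * a + t * b : ℤ) : ZMod b) = ((1 : ℤ) : ZMod b) := by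
        rw [show (s * a + t * b : ℤ) = 1 by linarith]
      push_cast at this
      simpa using this
    rw [show ((s*0 : ℤ) : ZMod b) = 0 by push_cast; ring,
        show ((s*1 : ℤ) : ZMod b) = ((s : ℤ) : ZMod b) by push_cast; ring,
        show ((s : ℤ) : ZMod b) = (hu.unit : ZMod b) by rw [hu.unit_spec]]
    exact K_zero_eq b hu.unit
  rw [h1, hmul, h2, h3]

open ArithmeticFunction ArithmeticFunction.Moebius in
lemma R_squarefree_aux : ∀ D : ℕ, ∀ hD : D ≠ 0, Squarefree D →
    (haveI : NeZero D := ⟨hD⟩; R D = ((μ D : ℤ) : ℂ)) := by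
  intro D
  induction D using Nat.strong_induction_on with
  | _ D ih =>
    intro hD hsq
    haveI : NeZero D := ⟨hD⟩
    show R D = _
    rcases eq_or_ne D 1 with h1 | h1
    · subst h1
      rw [R_one]
      simp
    · obtain ⟨q, hq, hqd⟩ : ∃ q, q.Prime ∧ q ∣ D := ⟨D.minFac, Nat.minFac_prime h1, Nat.minFac_dvd D⟩
      obtain ⟨D', rfl⟩ := hqd
      haveI : Fact q.Prime := ⟨hq⟩
      haveI : NeZero q := ⟨hq.ne_zero⟩
      have hD'0 : D' ≠ 0 := by rintro rfl; simp at hD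
      haveI : NeZero D' := ⟨hD'0⟩
      have hcop : Nat.Coprime q D' := (Nat.Prime.coprime_iff_not_dvd hq).mpr (by
        intro hdvd
        have h2 := Nat.isUnit_iff.mp (hsq q (mul_dvd_mul_left q hdvd))
        have h3 := hq.one_lt
        omega)
      have hsq' : Squarefree D' := hsq.squarefree_of_dvd (dvd_mul_left D' q)
      have hlt : D' < q * D' := (Nat.lt_mul_iff_one_lt_left (Nat.pos_of_ne_zero hD'0)).mpr hq.one_lt
      have := KL_R_mul q D' hcop
      rw [this, R_prime q, ih D' hlt hD'0 hsq']
      rw [isMultiplicative_moebius.map_mul_of_coprime hcop, moebius_apply_prime hq]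
      push_cast
      ring

open ArithmeticFunction ArithmeticFunction.Moebius in
lemma R_squarefree (D : ℕ) [NeZero D] (hsq : Squarefree D) : R D = ((μ D : ℤ) : ℂ) :=
  R_squarefree_aux D (NeZero.ne D) hsq

end KloostermanAux

open ArithmeticFunction ArithmeticFunction.Moebius in
/-- For square-free `D > 1`, `(c,D)=1`, and `ℓ = ℓ₀ℓ'` as above, the untwisted
Kloosterman sums satisfy `S(ℓ₀Dn, ℓ'; cD) = S(n, ℓD̄; c)·μ(D)`, and equivalently
`S(n, ℓD̄; c) = μ(D)·S(ℓ₀Dn, ℓ'; cD)`. -/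
theorem kloosterman_mul_level_squarefree (D c : ℕ) [NeZero D] [NeZero c] (hD : 1 < D)
    (hsq : Squarefree D) (hc : 1 ≤ c) (hcop : Nat.Coprime c D)
    (ℓ ℓ₀ ℓ' n : ℕ) (hℓpos : 1 ≤ ℓ) (hn : 1 ≤ n) (hfac : ℓ = ℓ₀ * ℓ')
    (hℓ₀ : ∀ p : ℕ, p.Prime → p ∣ ℓ₀ → p ∣ D) (hℓ' : Nat.Coprime ℓ' D)
    (Dbar : ℤ) (hDbar : (D : ℤ) * Dbar ≡ 1 [ZMOD (c : ℤ)]) :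
    kloosterman (c * D) ((ℓ₀ : ℤ) * D * n) (ℓ' : ℤ)
        = kloosterman c (n : ℤ) ((ℓ : ℤ) * Dbar) * ((μ D : ℤ) : ℂ)
      ∧ kloosterman c (n : ℤ) ((ℓ : ℤ) * Dbar)
        = ((μ D : ℤ) : ℂ) * kloosterman (c * D) ((ℓ₀ : ℤ) * D * n) (ℓ' : ℤ) :=  by
  -- Bezout coefficients
  obtain ⟨s, t, hst⟩ := Nat.isCoprime_iff_coprime.mpr hcop
  set M : ℤ := (ℓ₀ : ℤ) * D * n with hM
  set N : ℤ := (ℓ' : ℤ) with hN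
  have huv : t * (D:ℤ) + s * c = 1 := by linarith
  have hmul := kloosterman_mul c D hcop t s M N huv
  -- the mod-c factor
  have htD : ((t : ZMod c)) * (D : ZMod c) = 1 := by
    have : ((t * D + s * c : ℤ) : ZMod c) = ((1 : ℤ) : ZMod c) := by rw [huv]
    push_cast at this
    simpa using this
  have hDbarc : ((Dbar : ZMod c)) * (D : ZMod c) = 1 := by
    have : (((D:ℤ) * Dbar : ℤ) : ZMod c) = ((1 : ℤ) : ZMod c) :=
      (ZMod.intCast_eq_intCast_iff _ _ _).mpr hDbar
    push_cast at this
    rw [mul_comm]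
    simpa using this
  have htDbar : ((t : ℤ) : ZMod c) = ((Dbar : ℤ) : ZMod c) := by
    have h1 : ((t : ZMod c)) * ((D : ZMod c) * (Dbar : ZMod c)) = ((Dbar : ZMod c)) * ((t : ZMod c) * (D : ZMod c)) := by ring
    have h2 : (D : ZMod c) * (Dbar : ZMod c) = 1 := by rw [mul_comm]; exact hDbarc
    calc ((t : ℤ) : ZMod c) = ((t : ZMod c)) * ((D : ZMod c) * (Dbar : ZMod c)) := by rw [h2, mul_one]
      _ = ((Dbar : ZMod c)) * ((t : ZMod c) * (D : ZMod c)) := h1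
      _ = ((Dbar : ℤ) : ZMod c) := by rw [htD, mul_one]
  have hl0c : Nat.Coprime ℓ₀ c := by
    by_contra hne
    have hg := Nat.minFac_prime hne
    set p := (Nat.gcd ℓ₀ c).minFac with hp
    have hpl : p ∣ ℓ₀ := (Nat.minFac_dvd _).trans (Nat.gcd_dvd_left _ _)
    have hpc : p ∣ c := (Nat.minFac_dvd _).trans (Nat.gcd_dvd_right _ _)
    have hpD := hℓ₀ p hg hpl
    have hone : p ∣ 1 := by
      rw [← hcop.gcd_eq_one]
      exact Nat.dvd_gcd hpc hpD
    exact hg.one_lt.ne' (Nat.dvd_one.mp hone)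
  set a : (ZMod c)ˣ := ZMod.unitOfCoprime ℓ₀ hl0c with ha
  have hav : (a : ZMod c) = (ℓ₀ : ZMod c) := ZMod.coe_unitOfCoprime ℓ₀ hl0c
  have hKc : K c ((t*M : ℤ) : ZMod c) ((t*N : ℤ) : ZMod c) = kloosterman c (n:ℤ) ((ℓ:ℤ)*Dbar) := by
    have e1 : ((t*M : ℤ) : ZMod c) = (a : ZMod c) * ((n:ℤ) : ZMod c) := by
      rw [hav]
      push_cast [hM]
      linear_combination ((ℓ₀:ZMod c) * (n:ZMod c)) * htD
    rw [e1, show ((t*N : ℤ) : ZMod c) = ((ℓ'*Dbar : ℤ) : ZMod c) by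
        push_cast [hN]
        rw [show ((t : ℤ) : ZMod c) = ((Dbar : ℤ) : ZMod c) from htDbar]
        ring]
    rw [K_smul c a _ _, kloosterman_eq_K]
    congr 1
    rw [hav]
    push_cast [hfac]
    ring
  have hKD : K D ((s*M : ℤ) : ZMod D) ((s*N : ℤ) : ZMod D) = ((μ D : ℤ) : ℂ) := by
    have e1 : ((s*M : ℤ) : ZMod D) = 0 := by
      push_cast [hM, ZMod.natCast_self]
      ring
    have hu : IsUnit ((s*N : ℤ) : ZMod D) := by
      have hus : IsUnit ((s : ℤ) : ZMod D) := by
        apply IsUnit.of_mul_eq_one ((c : ZMod D))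
        have : ((s*c + t*D : ℤ) : ZMod D) = ((1:ℤ) : ZMod D) := by
          rw [show (s*c+t*D : ℤ) = 1 by linarith]
        push_cast at this
        simpa using this
      have hul : IsUnit ((ℓ' : ℕ) : ZMod D) :=
        ⟨ZMod.unitOfCoprime ℓ' hℓ', ZMod.coe_unitOfCoprime ℓ' hℓ'⟩
      have he : ((s*N : ℤ) : ZMod D) = ((s:ℤ):ZMod D) * ((ℓ' : ℕ) : ZMod D) := by
        push_cast [hN]
        ring
      rw [he]
      exact hus.mul hul
    rw [e1, show ((s*N : ℤ) : ZMod D) = (hu.unit : ZMod D) from hu.unit_spec.symm,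
      K_zero_eq D hu.unit]
    exact R_squarefree D hsq
  have part1 : kloosterman (c * D) ((ℓ₀ : ℤ) * D * n) (ℓ' : ℤ)
      = kloosterman c (n : ℤ) ((ℓ : ℤ) * Dbar) * ((μ D : ℤ) : ℂ) := by
    rw [show ((ℓ₀ : ℤ) * D * n) = M from rfl, show ((ℓ' : ℤ)) = N from rfl, hmul, hKc, hKD]
  have hμ2 : ((μ D : ℤ) : ℂ) * ((μ D : ℤ) : ℂ) = 1 := by
    rw [moebius_apply_of_squarefree hsq]
    push_cast
    rw [← pow_add]
    exact Even.neg_one_pow ⟨_, rfl⟩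
  refine ⟨part1, ?_⟩
  rw [part1]
  linear_combination (- kloosterman c (n:ℤ) ((ℓ:ℤ)*Dbar)) * hμ2
end
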